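/- Let g = 3 and let F : 𝔽^6 → 𝔽^6 be the σ-semilinear map with F(e_1) = e_6, F(e_2) = e_5, F(e_3) = e_1, F(e_4) = F(e_5) = F(e_6) = 0, and V : 𝔽^6 → 𝔽^6 the σ⁻¹-semilinear map with V(e_1) = 0, V(e_2) = −e_5, V(e_3) = −e_4, V(e_4) = e_6, V(e_5) = V(e_6) = 0. Then a chain of subspaces 0 = W_0 ⊂ W_1 ⊂ W_2 ⊂ W_3 of 𝔽^6 with dim W_j = j is a symplectic flag stable under F and V if and only if one of the following holds: (X) W_2 = span(e_5, e_6) and W_3 ⊆ span(e_1, e_4, e_5, e_6); (Y) W_1 = 𝔽·e_6 and span(e_5, e_6) ⊆ W_3 ⊆ span(e_1, e_4, e_5, e_6). -/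

import Mathlib

open Submodule Module
section Aux
variable {K : Type*} [Field K]

private def sgl (i : Fin 6) : Fin 6 → K := Pi.single i 1

private lemma sgl_apply (i j : Fin 6) : (sgl i : Fin 6 → K) j = if j = i then 1 else 0 := by
  simp [sgl, Pi.single_apply]

private lemma aux_decomp (x : Fin 6 → K) :
    x = x 0 • sgl 0 + x 1 • sgl 1 + x 2 • sgl 2
      + x 3 • sgl 3 + x 4 • sgl 4 + x 5 • sgl 5 := by
  funext j
  fin_cases j <;> simp [sgl_apply]

private lemma aux_li : LinearIndependent K (sgl : Fin 6 → Fin 6 → K) := by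
  have := (Pi.basisFun K (Fin 6)).linearIndependent
  convert this using 1
  funext i
  simp [sgl]

private lemma mem5_iff (x : Fin 6 → K) :
    x ∈ span K ({sgl 5} : Set (Fin 6 → K)) ↔
      x 0 = 0 ∧ x 1 = 0 ∧ x 2 = 0 ∧ x 3 = 0 ∧ x 4 = 0 := by
  constructor
  · intro hx
    induction hx using Submodule.span_induction with
    | mem z hz =>
      simp only [Set.mem_singleton_iff] at hz
      subst hz
      refine ⟨?_, ?_, ?_, ?_, ?_⟩ <;> simp [sgl_apply]
    | zero => simp
    | add a b _ _ ha hb => exact ⟨by simp [ha.1, hb.1], by simp [ha.2.1, hb.2.1],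
        by simp [ha.2.2.1, hb.2.2.1], by simp [ha.2.2.2.1, hb.2.2.2.1],
        by simp [ha.2.2.2.2, hb.2.2.2.2]⟩
    | smul c a _ ha => exact ⟨by simp [ha.1], by simp [ha.2.1],
        by simp [ha.2.2.1], by simp [ha.2.2.2.1], by simp [ha.2.2.2.2]⟩
  · rintro ⟨h0, h1, h2, h3, h4⟩
    have hx : x = x 5 • sgl 5 := by
      funext j; fin_cases j <;> simp [sgl_apply, h0, h1, h2, h3, h4]
    rw [hx]
    exact smul_mem _ _ (subset_span rfl)

private lemma mem45_iff (x : Fin 6 → K) :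
    x ∈ span K ({sgl 4, sgl 5} : Set (Fin 6 → K)) ↔
      x 0 = 0 ∧ x 1 = 0 ∧ x 2 = 0 ∧ x 3 = 0 := by
  constructor
  · intro hx
    induction hx using Submodule.span_induction with
    | mem z hz =>
      rcases hz with rfl | rfl <;>
        exact ⟨by simp [sgl_apply], by simp [sgl_apply],
          by simp [sgl_apply], by simp [sgl_apply]⟩
    | zero => simp
    | add a b _ _ ha hb => exact ⟨by simp [ha.1, hb.1], by simp [ha.2.1, hb.2.1],
        by simp [ha.2.2.1, hb.2.2.1], by simp [ha.2.2.2, hb.2.2.2]⟩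
    | smul c a _ ha => exact ⟨by simp [ha.1], by simp [ha.2.1],
        by simp [ha.2.2.1], by simp [ha.2.2.2]⟩
  · rintro ⟨h0, h1, h2, h3⟩
    have hx : x = x 4 • sgl 4 + x 5 • sgl 5 := by
      funext j; fin_cases j <;> simp [sgl_apply, h0, h1, h2, h3]
    rw [hx]
    exact add_mem (smul_mem _ _ (subset_span (by simp)))
      (smul_mem _ _ (subset_span (by simp)))

private lemma memU_iff (x : Fin 6 → K) :
    x ∈ span K ({sgl 0, sgl 3, sgl 4, sgl 5} :
      Set (Fin 6 → K)) ↔ x 1 = 0 ∧ x 2 = 0 := by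
  constructor
  · intro hx
    induction hx using Submodule.span_induction with
    | mem z hz =>
      rcases hz with rfl | rfl | rfl | rfl <;>
        exact ⟨by simp [sgl_apply], by simp [sgl_apply]⟩
    | zero => simp
    | add a b _ _ ha hb => exact ⟨by simp [ha.1, hb.1], by simp [ha.2, hb.2]⟩
    | smul c a _ ha => exact ⟨by simp [ha.1], by simp [ha.2]⟩
  · rintro ⟨h1, h2⟩
    have hx : x = x 0 • sgl 0 + x 3 • sgl 3 + x 4 • sgl 4 + x 5 • sgl 5 := by
      funext j; fin_cases j <;> simp [sgl_apply, h1, h2]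
    rw [hx]
    refine add_mem (add_mem (add_mem ?_ ?_) ?_) ?_ <;>
      exact smul_mem _ _ (subset_span (by simp))

private lemma finrank_S45 :
    finrank K (span K ({sgl 4, sgl 5} : Set (Fin 6 → K))) = 2 := by
  have hinj : Function.Injective (![4, 5] : Fin 2 → Fin 6) := by decide
  have h2 : LinearIndependent K ((sgl : Fin 6 → Fin 6 → K) ∘ ![4, 5]) :=
    aux_li.comp _ hinj
  have h3 := finrank_span_eq_card h2
  have hr : Set.range ((sgl : Fin 6 → Fin 6 → K) ∘ ![4, 5]) = {sgl 4, sgl 5} := by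
    ext z
    simp only [Set.mem_range, Function.comp_apply, Set.mem_insert_iff, Set.mem_singleton_iff]
    constructor
    · rintro ⟨i, rfl⟩; fin_cases i <;> simp
    · rintro (rfl | rfl); exacts [⟨0, rfl⟩, ⟨1, rfl⟩]
  rw [hr] at h3
  simpa using h3

private lemma finrank_U :
    finrank K (span K ({sgl 0, sgl 3, sgl 4, sgl 5} : Set (Fin 6 → K))) = 4 := by
  have hinj : Function.Injective (![0, 3, 4, 5] : Fin 4 → Fin 6) := by decide
  have h2 : LinearIndependent K ((sgl : Fin 6 → Fin 6 → K) ∘ ![0, 3, 4, 5]) :=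
    aux_li.comp _ hinj
  have h3 := finrank_span_eq_card h2
  have hr : Set.range ((sgl : Fin 6 → Fin 6 → K) ∘ ![0, 3, 4, 5])
      = {sgl 0, sgl 3, sgl 4, sgl 5} := by
    ext z
    simp only [Set.mem_range, Function.comp_apply, Set.mem_insert_iff, Set.mem_singleton_iff]
    constructor
    · rintro ⟨i, rfl⟩; fin_cases i <;> simp
    · rintro (rfl | rfl | rfl | rfl); exacts [⟨0, rfl⟩, ⟨1, rfl⟩, ⟨2, rfl⟩, ⟨3, rfl⟩]
  rw [hr] at h3
  simpa using h3

end Aux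

/-- case `g = 3`, `w = s₃₂₃`. `𝔽^6` carries the standard basis
`e 0, …, e 5` (`e_i = e (i-1)` in the paper's `1`-based numbering) and the standard
alternating form. `F` is the `σ`-semilinear map with `F e₁ = e₆`, `F e₂ = e₅`,
`F e₃ = e₁`, `F e₄ = F e₅ = F e₆ = 0`, and `V` the `σ⁻¹`-semilinear map with
`V e₁ = 0`, `V e₂ = -e₅`, `V e₃ = -e₄`, `V e₄ = e₆`, `V e₅ = V e₆ = 0`. A chain
`0 = W₀ ⊂ W₁ ⊂ W₂ ⊂ W₃` with `dim W_j = j` is a symplectic flag stable under `F` and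
`V` iff (X) `W₂ = span (e₅, e₆)` and `W₃ ⊆ span (e₁, e₄, e₅, e₆)`, or
(Y) `W₁ = 𝔽·e₆` and `span (e₅, e₆) ⊆ W₃ ⊆ span (e₁, e₄, e₅, e₆)`. -/
theorem stmt14 {p : ℕ} (hp : p.Prime) {𝔽 : Type*} [Field 𝔽] [IsAlgClosed 𝔽] [CharP 𝔽 p]
    (e : Fin 6 → Fin 6 → 𝔽) (he : ∀ i, e i = Pi.single i 1)
    (B : (Fin 6 → 𝔽) → (Fin 6 → 𝔽) → 𝔽)
    (hB : ∀ x y, B x y = x 0 * y 3 - x 3 * y 0 + (x 1 * y 4 - x 4 * y 1)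
      + (x 2 * y 5 - x 5 * y 2))
    (F V : (Fin 6 → 𝔽) → (Fin 6 → 𝔽))
    (hFadd : ∀ x y, F (x + y) = F x + F y)
    (hVadd : ∀ x y, V (x + y) = V x + V y)
    (hFsmul : ∀ (c : 𝔽) x, F (c • x) = c ^ p • F x)
    (hVsmul : ∀ (c : 𝔽) x, V (c ^ p • x) = c • V x)
    (hF0 : F (e 0) = e 5) (hF1 : F (e 1) = e 4) (hF2 : F (e 2) = e 0)
    (hF3 : F (e 3) = 0) (hF4 : F (e 4) = 0) (hF5 : F (e 5) = 0)
    (hV0 : V (e 0) = 0) (hV1 : V (e 1) = -e 4) (hV2 : V (e 2) = -e 3)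
    (hV3 : V (e 3) = e 5) (hV4 : V (e 4) = 0) (hV5 : V (e 5) = 0)
    (W1 W2 W3 : Submodule 𝔽 (Fin 6 → 𝔽)) (hW12 : W1 ≤ W2) (hW23 : W2 ≤ W3)
    (hd1 : Module.finrank 𝔽 W1 = 1) (hd2 : Module.finrank 𝔽 W2 = 2)
    (hd3 : Module.finrank 𝔽 W3 = 3) :
    ((∀ x ∈ W3, ∀ y ∈ W3, B x y = 0) ∧
      (∀ x ∈ W1, F x ∈ W1 ∧ V x ∈ W1) ∧ (∀ x ∈ W2, F x ∈ W2 ∧ V x ∈ W2) ∧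
      (∀ x ∈ W3, F x ∈ W3 ∧ V x ∈ W3)) ↔
    ((W2 = Submodule.span 𝔽 {e 4, e 5} ∧
        W3 ≤ Submodule.span 𝔽 {e 0, e 3, e 4, e 5}) ∨
      (W1 = Submodule.span 𝔽 {e 5} ∧ Submodule.span 𝔽 {e 4, e 5} ≤ W3 ∧
        W3 ≤ Submodule.span 𝔽 {e 0, e 3, e 4, e 5})) := by
  haveI : Fact p.Prime := ⟨hp⟩
  have he' : ∀ i, e i = (sgl i : Fin 6 → 𝔽) := he
  simp only [he'] at hF0 hF1 hF2 hF3 hF4 hF5 hV0 hV1 hV2 hV3 hV4 hV5 ⊢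
  -- the p-th root function
  set r : 𝔽 → 𝔽 := fun a => (frobeniusEquiv 𝔽 p).symm a with hrdef
  have hr : ∀ a, r a ^ p = a := by
    intro a
    have := (frobeniusEquiv 𝔽 p).apply_symm_apply a
    simpa [frobeniusEquiv_apply, frobenius_def, hrdef] using this
  have hrz : r 0 = 0 := by simp [hrdef]
  have hr0 : ∀ a, r a = 0 → a = 0 := by
    intro a h
    rw [← hr a, h, zero_pow hp.ne_zero]
  -- formula for F
  have hF' : ∀ x : Fin 6 → 𝔽,
      F x = (x 2) ^ p • sgl 0 + (x 1) ^ p • sgl 4 + (x 0) ^ p • sgl 5 := by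
    intro x
    have hx := aux_decomp x
    calc F x = F (x 0 • sgl 0 + x 1 • sgl 1 + x 2 • sgl 2
        + x 3 • sgl 3 + x 4 • sgl 4 + x 5 • sgl 5) := by rw [← hx]
      _ = _ := by
        simp only [hFadd, hFsmul, hF0, hF1, hF2, hF3, hF4, hF5, smul_zero,
          add_zero, zero_add]
        module
  -- formula for V
  have hV' : ∀ x : Fin 6 → 𝔽,
      V x = -(r (x 2)) • sgl 3 + -(r (x 1)) • sgl 4 + r (x 3) • sgl 5 := by
    intro x
    have hx := aux_decomp x
    rw [← hr (x 0), ← hr (x 1), ← hr (x 2), ← hr (x 3), ← hr (x 4), ← hr (x 5)] at hx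
    calc V x = V (r (x 0) ^ p • sgl 0 + r (x 1) ^ p • sgl 1 + r (x 2) ^ p • sgl 2
        + r (x 3) ^ p • sgl 3 + r (x 4) ^ p • sgl 4 + r (x 5) ^ p • sgl 5) := by rw [← hx]
      _ = _ := by
        simp only [hVadd, hVsmul, hV0, hV1, hV2, hV3, hV4, hV5, smul_zero,
          add_zero, zero_add, smul_neg]
        module
  -- component formulas
  have hFc0 : ∀ x : Fin 6 → 𝔽, F x 0 = (x 2) ^ p := by
    intro x; rw [hF']; simp [sgl_apply]
  have hFc1 : ∀ x : Fin 6 → 𝔽, F x 1 = 0 := by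
    intro x; rw [hF']; simp [sgl_apply]
  have hFc2 : ∀ x : Fin 6 → 𝔽, F x 2 = 0 := by
    intro x; rw [hF']; simp [sgl_apply]
  have hFc3 : ∀ x : Fin 6 → 𝔽, F x 3 = 0 := by
    intro x; rw [hF']; simp [sgl_apply]
  have hFc4 : ∀ x : Fin 6 → 𝔽, F x 4 = (x 1) ^ p := by
    intro x; rw [hF']; simp [sgl_apply]
  have hFc5 : ∀ x : Fin 6 → 𝔽, F x 5 = (x 0) ^ p := by
    intro x; rw [hF']; simp [sgl_apply]
  have hVc0 : ∀ x : Fin 6 → 𝔽, V x 0 = 0 := by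
    intro x; rw [hV']; simp [sgl_apply]
  have hVc1 : ∀ x : Fin 6 → 𝔽, V x 1 = 0 := by
    intro x; rw [hV']; simp [sgl_apply]
  have hVc2 : ∀ x : Fin 6 → 𝔽, V x 2 = 0 := by
    intro x; rw [hV']; simp [sgl_apply]
  have hVc3 : ∀ x : Fin 6 → 𝔽, V x 3 = -(r (x 2)) := by
    intro x; rw [hV']; simp [sgl_apply]
  have hVc4 : ∀ x : Fin 6 → 𝔽, V x 4 = -(r (x 1)) := by
    intro x; rw [hV']; simp [sgl_apply]
  have hVc5 : ∀ x : Fin 6 → 𝔽, V x 5 = r (x 3) := by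
    intro x; rw [hV']; simp [sgl_apply]
  -- simple F/V values on U-type vectors
  have hFU : ∀ x : Fin 6 → 𝔽, x 1 = 0 → x 2 = 0 → F x = (x 0) ^ p • sgl 5 := by
    intro x h1 h2
    rw [hF', h1, h2, zero_pow hp.ne_zero]
    simp
  have hVU : ∀ x : Fin 6 → 𝔽, x 1 = 0 → x 2 = 0 → V x = r (x 3) • sgl 5 := by
    intro x h1 h2
    rw [hV', h1, h2, hrz]
    simp
  -- isotropy helper
  have hiso' : (sgl 4 : Fin 6 → 𝔽) ∈ W3 → (sgl 5 : Fin 6 → 𝔽) ∈ W3 →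
      (∀ z ∈ W3, z 1 = 0 ∧ z 2 = 0) → ∀ x ∈ W3, ∀ y ∈ W3, B x y = 0 := by
    intro h4 h5 hU x hx y hy
    obtain ⟨hx1, hx2⟩ := hU x hx
    obtain ⟨hy1, hy2⟩ := hU y hy
    have key : x 0 * y 3 - x 3 * y 0 = 0 := by
      by_contra hd
      have hx' : (x 0 • sgl 0 + x 3 • sgl 3 : Fin 6 → 𝔽) ∈ W3 := by
        have hxe : (x 0 • sgl 0 + x 3 • sgl 3 : Fin 6 → 𝔽)
            = x - x 4 • sgl 4 - x 5 • sgl 5 := by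
          funext j; fin_cases j <;> simp [sgl_apply, hx1, hx2]
        rw [hxe]; exact sub_mem (sub_mem hx (smul_mem _ _ h4)) (smul_mem _ _ h5)
      have hy' : (y 0 • sgl 0 + y 3 • sgl 3 : Fin 6 → 𝔽) ∈ W3 := by
        have hye : (y 0 • sgl 0 + y 3 • sgl 3 : Fin 6 → 𝔽)
            = y - y 4 • sgl 4 - y 5 • sgl 5 := by
          funext j; fin_cases j <;> simp [sgl_apply, hy1, hy2]
        rw [hye]; exact sub_mem (sub_mem hy (smul_mem _ _ h4)) (smul_mem _ _ h5)
      have he0 : (sgl 0 : Fin 6 → 𝔽) ∈ W3 := by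
        have heq : (sgl 0 : Fin 6 → 𝔽) = (x 0 * y 3 - x 3 * y 0)⁻¹ •
            (y 3 • (x 0 • sgl 0 + x 3 • sgl 3) - x 3 • (y 0 • sgl 0 + y 3 • sgl 3)) := by
          funext j
          fin_cases j <;> simp [sgl_apply] <;> (try field_simp [hd]) <;> first | ring1 | simp
        rw [heq]
        exact smul_mem _ _ (sub_mem (smul_mem _ _ hx') (smul_mem _ _ hy'))
      have he3 : (sgl 3 : Fin 6 → 𝔽) ∈ W3 := by
        have heq : (sgl 3 : Fin 6 → 𝔽) = (x 0 * y 3 - x 3 * y 0)⁻¹ •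
            (x 0 • (y 0 • sgl 0 + y 3 • sgl 3) - y 0 • (x 0 • sgl 0 + x 3 • sgl 3)) := by
          funext j
          fin_cases j <;> simp [sgl_apply] <;> (try field_simp [hd]) <;> first | ring1 | simp
        rw [heq]
        exact smul_mem _ _ (sub_mem (smul_mem _ _ hy') (smul_mem _ _ hx'))
      have hUle : span 𝔽 ({sgl 0, sgl 3, sgl 4, sgl 5} : Set (Fin 6 → 𝔽)) ≤ W3 := by
        rw [span_le]
        rintro z hz
        simp only [Set.mem_insert_iff, Set.mem_singleton_iff] at hz
        rcases hz with rfl | rfl | rfl | rfl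
        exacts [he0, he3, h4, h5]
      have hcon : (4 : ℕ) ≤ 3 := by
        calc (4 : ℕ) = finrank 𝔽 (span 𝔽 ({sgl 0, sgl 3, sgl 4, sgl 5} :
              Set (Fin 6 → 𝔽))) := finrank_U.symm
          _ ≤ finrank 𝔽 W3 := Submodule.finrank_mono hUle
          _ = 3 := hd3
      omega
    rw [hB, hx1, hx2, hy1, hy2]
    linear_combination key
  constructor
  · -- forward direction
    rintro ⟨hiso, hs1, hs2, hs3⟩
    -- W3 is contained in U, componentwise
    have hW3c : ∀ z ∈ W3, z 1 = 0 ∧ z 2 = 0 := by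
      intro z hz
      obtain ⟨hFz, hVz⟩ := hs3 z hz
      have h2 : z 2 = 0 := by
        have hb := hiso (F z) hFz (V z) hVz
        rw [hB, hFc0, hFc1, hFc2, hFc3, hFc4, hFc5, hVc0, hVc1, hVc2, hVc3,
          hVc4, hVc5] at hb
        have hb' : z 2 ^ p * r (z 2) = 0 := by linear_combination -hb
        rcases mul_eq_zero.1 hb' with h | h
        · exact pow_eq_zero_iff hp.ne_zero |>.1 h
        · exact hr0 _ h
      have h1 : z 1 = 0 := by
        have hb := hiso z hz (F z) hFz
        rw [hB, hFc0, hFc1, hFc2, hFc3, hFc4, hFc5, h2, zero_pow hp.ne_zero] at hb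
        have hb' : z 1 * z 1 ^ p = 0 := by linear_combination hb
        rcases mul_eq_zero.1 hb' with h | h
        · exact h
        · exact pow_eq_zero_iff hp.ne_zero |>.1 h
      exact ⟨h1, h2⟩
    have hW3U : W3 ≤ span 𝔽 ({sgl 0, sgl 3, sgl 4, sgl 5} : Set (Fin 6 → 𝔽)) :=
      fun z hz => (memU_iff z).2 (hW3c z hz)
    -- a generator of W1
    obtain ⟨u, huW1, hu0'⟩ := Submodule.exists_mem_ne_zero_of_ne_bot (p := W1)
      (by intro h; rw [h] at hd1; simp at hd1)
    have hW1u : W1 = span 𝔽 {u} := by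
      refine (Submodule.eq_of_le_of_finrank_le
        ((span_singleton_le_iff_mem u W1).2 huW1) ?_).symm
      rw [hd1, finrank_span_singleton hu0']
    obtain ⟨hu1, hu2⟩ := hW3c u (hW23 (hW12 huW1))
    -- components of u
    obtain ⟨c, hc⟩ := Submodule.mem_span_singleton.1 (hW1u ▸ (hs1 u huW1).1)
    obtain ⟨d, hd⟩ := Submodule.mem_span_singleton.1 (hW1u ▸ (hs1 u huW1).2)
    have hu0 : u 0 = 0 := by
      by_cases hc0 : c = 0
      · have h5 := congrFun hc 5
        simp only [Pi.smul_apply, smul_eq_mul, hc0, zero_mul] at h5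
        rw [hFc5] at h5
        exact pow_eq_zero_iff hp.ne_zero |>.1 h5.symm
      · have h0 := congrFun hc 0
        simp only [Pi.smul_apply, smul_eq_mul] at h0
        rw [hFc0, hu2, zero_pow hp.ne_zero] at h0
        exact (mul_eq_zero.1 h0).resolve_left hc0
    have hu3 : u 3 = 0 := by
      by_cases hd0 : d = 0
      · have h5 := congrFun hd 5
        simp only [Pi.smul_apply, smul_eq_mul, hd0, zero_mul] at h5
        rw [hVc5] at h5
        exact hr0 _ h5.symm
      · have h3 := congrFun hd 3
        simp only [Pi.smul_apply, smul_eq_mul] at h3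
        rw [hVc3, hu2, hrz, neg_zero] at h3
        exact (mul_eq_zero.1 h3).resolve_left hd0
    by_cases hX : W2 = span 𝔽 ({sgl 4, sgl 5} : Set (Fin 6 → 𝔽))
    · exact Or.inl ⟨hX, hW3U⟩
    · -- case Y
      have hyex : ∃ y ∈ W2, y 0 ≠ 0 ∨ y 3 ≠ 0 := by
        by_contra hcon
        push_neg at hcon
        apply hX
        have hle : W2 ≤ span 𝔽 ({sgl 4, sgl 5} : Set (Fin 6 → 𝔽)) := by
          intro z hz
          obtain ⟨hz0, hz3⟩ := hcon z hz
          obtain ⟨hz1, hz2⟩ := hW3c z (hW23 hz)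
          exact (mem45_iff z).2 ⟨hz0, hz1, hz2, hz3⟩
        exact Submodule.eq_of_le_of_finrank_le hle (by rw [hd2, finrank_S45])
      obtain ⟨y, hyW2, hy03⟩ := hyex
      obtain ⟨hy1, hy2⟩ := hW3c y (hW23 hyW2)
      have he5W2 : (sgl 5 : Fin 6 → 𝔽) ∈ W2 := by
        obtain ⟨hFy, hVy⟩ := hs2 y hyW2
        rcases hy03 with h0 | h3
        · have hFyeq : F y = (y 0) ^ p • sgl 5 := hFU y hy1 hy2
          have hm := W2.smul_mem ((y 0) ^ p)⁻¹ hFy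
          rwa [hFyeq, inv_smul_smul₀ (pow_ne_zero _ h0)] at hm
        · have hVyeq : V y = r (y 3) • sgl 5 := hVU y hy1 hy2
          have hry : r (y 3) ≠ 0 := fun h => h3 (hr0 _ h)
          have hm := W2.smul_mem (r (y 3))⁻¹ hVy
          rwa [hVyeq, inv_smul_smul₀ hry] at hm
      have hu4 : u 4 = 0 := by
        by_contra h4
        apply hX
        have hueq : u - u 5 • sgl 5 = u 4 • (sgl 4 : Fin 6 → 𝔽) := by
          funext j; fin_cases j <;> simp [sgl_apply, hu0, hu1, hu2, hu3]
        have he4W2 : (sgl 4 : Fin 6 → 𝔽) ∈ W2 := by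
          have hm : u 4 • (sgl 4 : Fin 6 → 𝔽) ∈ W2 := by
            rw [← hueq]
            exact sub_mem (hW12 huW1) (smul_mem _ _ he5W2)
          have := W2.smul_mem (u 4)⁻¹ hm
          rwa [inv_smul_smul₀ h4] at this
        have hle : span 𝔽 ({sgl 4, sgl 5} : Set (Fin 6 → 𝔽)) ≤ W2 := by
          rw [span_le]
          rintro z hz
          simp only [Set.mem_insert_iff, Set.mem_singleton_iff] at hz
          rcases hz with rfl | rfl
          exacts [he4W2, he5W2]
        exact (Submodule.eq_of_le_of_finrank_le hle (by rw [hd2, finrank_S45])).symm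
      have hu5 : u 5 ≠ 0 := by
        intro h5
        apply hu0'
        funext j
        fin_cases j
        exacts [hu0, hu1, hu2, hu3, hu4, h5]
      have hW1e5 : W1 = span 𝔽 ({sgl 5} : Set (Fin 6 → 𝔽)) := by
        have hue : u = u 5 • sgl 5 := by
          funext j; fin_cases j <;> simp [sgl_apply, hu0, hu1, hu2, hu3, hu4]
        rw [hW1u, hue]
        exact Submodule.span_singleton_smul_eq (IsUnit.mk0 _ hu5) _
      -- e4 ∈ W3
      have he4W3 : (sgl 4 : Fin 6 → 𝔽) ∈ W3 := by
        have hne : W2 ≠ W3 := by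
          intro h
          rw [h, hd3] at hd2
          omega
        obtain ⟨z, hzW3, hzW2⟩ := SetLike.exists_of_lt (lt_of_le_of_ne hW23 hne)
        obtain ⟨hz1, hz2⟩ := hW3c z hzW3
        have hbyz := hiso y (hW23 hyW2) z hzW3
        rw [hB, hy1, hy2, hz1, hz2] at hbyz
        have hbyz' : y 0 * z 3 - y 3 * z 0 = 0 := by linear_combination hbyz
        obtain ⟨t, ht0, ht3⟩ : ∃ t, z 0 = t * y 0 ∧ z 3 = t * y 3 := by
          rcases hy03 with h0 | h3
          · refine ⟨z 0 / y 0, by field_simp, ?_⟩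
            rw [div_mul_eq_mul_div, eq_div_iff h0]
            linear_combination hbyz'
          · refine ⟨z 3 / y 3, ?_, by field_simp⟩
            rw [div_mul_eq_mul_div, eq_div_iff h3]
            linear_combination -hbyz'
        have hwW3 : z - t • y ∈ W3 := sub_mem hzW3 (smul_mem _ _ (hW23 hyW2))
        have hw4 : (z - t • y) 4 ≠ 0 := by
          intro h4
          apply hzW2
          have h4' : z 4 - t * y 4 = 0 := by simpa using h4
          have hzeq : z = t • y + (z - t • y) 5 • sgl 5 := by
            funext j
            fin_cases j <;> simp [sgl_apply, hy1, hy2, hz1, hz2] <;>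
              first
                | ring1
                | linear_combination ht0
                | linear_combination ht3
                | linear_combination h4'
          rw [hzeq]
          exact add_mem (smul_mem _ _ hyW2) (smul_mem _ _ (hW12 (hW1e5 ▸ subset_span rfl)))
        have hweq : (z - t • y) - (z - t • y) 5 • sgl 5
            = (z - t • y) 4 • (sgl 4 : Fin 6 → 𝔽) := by
          funext j
          fin_cases j <;> simp [sgl_apply, hy1, hy2, hz1, hz2] <;>
            first
              | ring1
              | linear_combination ht0
              | linear_combination -ht0
              | linear_combination ht3
              | linear_combination -ht3
        have hm : (z - t • y) 4 • (sgl 4 : Fin 6 → 𝔽) ∈ W3 := by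
          rw [← hweq]
          exact sub_mem hwW3 (smul_mem _ _ (hW23 he5W2))
        have := W3.smul_mem ((z - t • y) 4)⁻¹ hm
        rwa [inv_smul_smul₀ hw4] at this
      refine Or.inr ⟨hW1e5, ?_, hW3U⟩
      rw [span_le]
      rintro z hz
      simp only [Set.mem_insert_iff, Set.mem_singleton_iff] at hz
      rcases hz with rfl | rfl
      exacts [he4W3, hW23 he5W2]
  · -- reverse direction
    rintro (⟨hX2, hX3⟩ | ⟨hY1, hY3a, hY3b⟩)
    · -- case X
      have he4W2 : (sgl 4 : Fin 6 → 𝔽) ∈ W2 := hX2 ▸ subset_span (by simp)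
      have he5W2 : (sgl 5 : Fin 6 → 𝔽) ∈ W2 := hX2 ▸ subset_span (by simp)
      have hW3c : ∀ z ∈ W3, z 1 = 0 ∧ z 2 = 0 := fun z hz => (memU_iff z).1 (hX3 hz)
      refine ⟨hiso' (hW23 he4W2) (hW23 he5W2) hW3c, ?_, ?_, ?_⟩
      · intro x hx
        obtain ⟨h0, h1, h2, h3⟩ := (mem45_iff x).1 (hX2 ▸ hW12 hx)
        constructor
        · rw [hFU x h1 h2, h0, zero_pow hp.ne_zero, zero_smul]
          exact zero_mem _
        · rw [hVU x h1 h2, h3, hrz, zero_smul]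
          exact zero_mem _
      · intro x hx
        obtain ⟨h0, h1, h2, h3⟩ := (mem45_iff x).1 (hX2 ▸ hx)
        constructor
        · rw [hFU x h1 h2, h0, zero_pow hp.ne_zero, zero_smul]
          exact zero_mem _
        · rw [hVU x h1 h2, h3, hrz, zero_smul]
          exact zero_mem _
      · intro x hx
        obtain ⟨h1, h2⟩ := hW3c x hx
        constructor
        · rw [hFU x h1 h2]
          exact smul_mem _ _ (hW23 he5W2)
        · rw [hVU x h1 h2]
          exact smul_mem _ _ (hW23 he5W2)
    · -- case Y
      have he5W1 : (sgl 5 : Fin 6 → 𝔽) ∈ W1 := hY1 ▸ subset_span rfl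
      have he4W3 : (sgl 4 : Fin 6 → 𝔽) ∈ W3 := hY3a (subset_span (by simp))
      have hW3c : ∀ z ∈ W3, z 1 = 0 ∧ z 2 = 0 := fun z hz => (memU_iff z).1 (hY3b hz)
      refine ⟨hiso' he4W3 (hW23 (hW12 he5W1)) hW3c, ?_, ?_, ?_⟩
      · intro x hx
        obtain ⟨h0, h1, h2, h3, h4⟩ := (mem5_iff x).1 (hY1 ▸ hx)
        constructor
        · rw [hFU x h1 h2, h0, zero_pow hp.ne_zero, zero_smul]
          exact zero_mem _
        · rw [hVU x h1 h2, h3, hrz, zero_smul]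
          exact zero_mem _
      · intro x hx
        obtain ⟨h1, h2⟩ := hW3c x (hW23 hx)
        constructor
        · rw [hFU x h1 h2]
          exact smul_mem _ _ (hW12 he5W1)
        · rw [hVU x h1 h2]
          exact smul_mem _ _ (hW12 he5W1)
      · intro x hx
        obtain ⟨h1, h2⟩ := hW3c x hx
        constructor
        · rw [hFU x h1 h2]
          exact smul_mem _ _ (hW23 (hW12 he5W1))
        · rw [hVU x h1 h2]
          exact smul_mem _ _ (hW23 (hW12 he5W1))
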